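/- For real p, q ≥ 0, Re(ρ) > −1/2, Re(ρ ± λ) > −1/2, and natural number n, the following derivative formula holds: dⁿ/dzⁿ [ e^{z/2} z^{−ρ−1/2} M_{p,q;λ,ρ}(z) ] = [(ρ−λ+1/2)_n / (2ρ+1)_n] · e^{z/2} z^{−ρ−n/2−1/2} · M_{p,q; λ−n/2, ρ+n/2}(z) for z ∈ ℂ \ (−∞, 0]. -/

import Mathlib

open MeasureTheory

/-- The (p,q)-extended beta function. -/
noncomputable def extBeta (p q x y : ℂ) : ℂ :=
  ∫ t in (0:ℝ)..1, (t:ℂ) ^ (x - 1) * ((1:ℂ) - t) ^ (y - 1) *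
    Complex.exp (-p / t - q / (1 - t))

/-- The (p,q)-confluent hypergeometric function, defined by its series. -/
noncomputable def Phi (p q b c z : ℂ) : ℂ :=
  ∑' n : ℕ, extBeta p q (b + n) (c - b) / Complex.betaIntegral b (c - b) * z ^ n / n.factorial

/-- The Pochhammer symbol (x)_n. -/
noncomputable def poch (x : ℂ) (n : ℕ) : ℂ := (ascPochhammer ℂ n).eval x

/-- The (p,q)-Whittaker function. -/
noncomputable def M (p q lam rho z : ℂ) : ℂ :=
  z ^ (rho + 1/2) * Complex.exp (-z / 2) * Phi p q (rho - lam + 1/2) (2 * rho + 1) z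

/- ### Auxiliary lemmas -/

lemma extBeta_bound (p q : ℝ) (hp : 0 ≤ p) (hq : 0 ≤ q) (b y : ℂ)
    (hb : 0 < b.re) (hy : 0 < y.re) :
    ∃ C : ℝ, 0 ≤ C ∧ ∀ k : ℕ, ‖extBeta (p:ℂ) (q:ℂ) (b + k) y‖ ≤ C := by
  refine ⟨|∫ t in (0:ℝ)..1, ‖(t:ℂ) ^ (b - 1) * ((1:ℂ) - t) ^ (y - 1)‖|, abs_nonneg _,
    fun k => ?_⟩
  rw [extBeta]
  apply intervalIntegral.norm_integral_le_abs_of_norm_le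
  · have h1 : ∀ᵐ t : ℝ ∂(volume.restrict (Set.uIoc (0:ℝ) 1)), t ≠ 1 := by
      refine Filter.Eventually.filter_mono (ae_mono Measure.restrict_le_self) ?_
      refine (MeasureTheory.ae_iff).2 ?_
      simpa using (Real.volume_singleton (x := (1:ℝ)))
    filter_upwards [ae_restrict_mem measurableSet_uIoc, h1] with t ht ht1
    rw [Set.uIoc_of_le (by norm_num : (0:ℝ) ≤ 1)] at ht
    have h0t : 0 < t := ht.1
    have ht1' : t < 1 := lt_of_le_of_ne ht.2 ht1
    have hA : ‖(t:ℂ) ^ (b + k - 1)‖ ≤ ‖(t:ℂ) ^ (b - 1)‖ := by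
      rw [Complex.norm_cpow_eq_rpow_re_of_pos h0t, Complex.norm_cpow_eq_rpow_re_of_pos h0t]
      apply Real.rpow_le_rpow_of_exponent_ge h0t ht1'.le
      simp [Complex.sub_re, Complex.add_re]
    have hC : ‖Complex.exp (-(p:ℂ) / t - (q:ℂ) / (1 - t))‖ ≤ 1 := by
      rw [Complex.norm_exp]
      rw [Real.exp_le_one_iff]
      have : (-(p:ℂ) / t - (q:ℂ) / (1 - t)) = ((-p / t - q / (1 - t) : ℝ) : ℂ) := by
        push_cast; ring
      rw [this, Complex.ofReal_re]
      have hpt : 0 ≤ p / t := div_nonneg hp h0t.le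
      have hqt : 0 ≤ q / (1 - t) := div_nonneg hq (by linarith)
      have hneg : -p / t - q / (1 - t) = -(p / t) - q / (1 - t) := by ring
      rw [hneg]
      linarith
    calc ‖(t:ℂ) ^ (b + k - 1) * ((1:ℂ) - t) ^ (y - 1) *
          Complex.exp (-(p:ℂ) / t - (q:ℂ) / (1 - t))‖
        = ‖(t:ℂ) ^ (b + k - 1)‖ * ‖((1:ℂ) - t) ^ (y - 1)‖ *
          ‖Complex.exp (-(p:ℂ) / t - (q:ℂ) / (1 - t))‖ := by rw [norm_mul, norm_mul]
      _ ≤ ‖(t:ℂ) ^ (b - 1)‖ * ‖((1:ℂ) - t) ^ (y - 1)‖ * 1 := by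
          gcongr
      _ = ‖(t:ℂ) ^ (b - 1) * ((1:ℂ) - t) ^ (y - 1)‖ := by rw [mul_one, norm_mul]
  · exact (Complex.betaIntegral_convergent hb hy).norm

lemma betaIntegral_ne_zero {u v : ℂ} (hu : 0 < u.re) (hv : 0 < v.re) :
    Complex.betaIntegral u v ≠ 0 := by
  have h := Complex.Gamma_mul_Gamma_eq_betaIntegral hu hv
  have hGu : Complex.Gamma u ≠ 0 := by
    apply Complex.Gamma_ne_zero
    intro m hm
    rw [hm] at hu
    simp at hu
    have : (0:ℝ) ≤ m := Nat.cast_nonneg m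
    linarith
  have hGv : Complex.Gamma v ≠ 0 := by
    apply Complex.Gamma_ne_zero
    intro m hm
    rw [hm] at hv
    simp at hv
    have : (0:ℝ) ≤ m := Nat.cast_nonneg m
    linarith
  intro h0
  rw [h0, mul_zero] at h
  exact mul_ne_zero hGu hGv h

lemma betaIntegral_succ {u v : ℂ} (hu : 0 < u.re) (hv : 0 < v.re) :
    Complex.betaIntegral (u + 1) v = u / (u + v) * Complex.betaIntegral u v := by
  have huv : 0 < (u + v).re := by
    rw [Complex.add_re]; linarith
  have hu1 : 0 < (u + 1).re := by rw [Complex.add_re, Complex.one_re]; linarith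
  have h1 := Complex.Gamma_mul_Gamma_eq_betaIntegral hu1 hv
  have h2 := Complex.Gamma_mul_Gamma_eq_betaIntegral hu hv
  have hune : u ≠ 0 := fun h => by simp [h] at hu
  have huvne : u + v ≠ 0 := fun h => by simp [h] at huv
  have e1 : Complex.Gamma (u + 1) = u * Complex.Gamma u := Complex.Gamma_add_one u hune
  have e2 : Complex.Gamma (u + 1 + v) = (u + v) * Complex.Gamma (u + v) := by
    have : u + 1 + v = (u + v) + 1 := by ring
    rw [this, Complex.Gamma_add_one _ huvne]
  have hG : Complex.Gamma (u + v) ≠ 0 := by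
    apply Complex.Gamma_ne_zero
    intro m hm
    rw [hm] at huv
    simp at huv
    have : (0:ℝ) ≤ m := Nat.cast_nonneg m
    linarith
  rw [e1, e2, mul_assoc, h2] at h1
  -- h1 : u * (Gamma (u+v) * betaIntegral u v) = (u+v) * Gamma (u+v) * betaIntegral (u+1) v
  field_simp
  rw [mul_comm]
  apply mul_left_cancel₀ hG
  linear_combination -h1

lemma poch_zero (x : ℂ) : poch x 0 = 1 := by simp [poch]

lemma poch_succ (x : ℂ) (n : ℕ) : poch x (n + 1) = poch x n * (x + n) := by
  simp [poch, ascPochhammer_succ_right]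

lemma poch_ne_zero {x : ℂ} (hx : 0 < x.re) (n : ℕ) : poch x n ≠ 0 := by
  induction n with
  | zero => simp [poch_zero]
  | succ n ih =>
    rw [poch_succ]
    refine mul_ne_zero ih ?_
    intro h
    have h2 : (x + (n:ℂ)).re = 0 := by rw [h]; simp
    rw [Complex.add_re, Complex.natCast_re] at h2
    have h3 : (0:ℝ) ≤ (n:ℝ) := Nat.cast_nonneg n
    linarith

/-- Summability of the `Phi` series. -/
lemma phi_summable (p q : ℝ) (hp : 0 ≤ p) (hq : 0 ≤ q) (b c : ℂ)
    (hb : 0 < b.re) (hcb : 0 < (c - b).re) (z : ℂ) :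
    Summable (fun k : ℕ => extBeta (p:ℂ) (q:ℂ) (b + k) (c - b) /
      Complex.betaIntegral b (c - b) * z ^ k / k.factorial) := by
  obtain ⟨C, hC0, hC⟩ := extBeta_bound p q hp hq b (c - b) hb hcb
  apply Summable.of_norm_bounded
    (g := fun k : ℕ => C / ‖Complex.betaIntegral b (c - b)‖ * (‖z‖ ^ k / k.factorial))
  · exact (Real.summable_pow_div_factorial ‖z‖).mul_left _
  · intro k
    have hB : 0 < ‖Complex.betaIntegral b (c - b)‖ :=
      norm_pos_iff.2 (betaIntegral_ne_zero hb hcb)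
    rw [norm_div, norm_mul, norm_div, norm_pow, Complex.norm_natCast, ← mul_div_assoc]
    gcongr
    exact hC k

/-- Termwise derivative of the `Phi` series. -/
lemma phi_hasDerivAt (p q : ℝ) (hp : 0 ≤ p) (hq : 0 ≤ q) (b c : ℂ)
    (hb : 0 < b.re) (hcb : 0 < (c - b).re) (z : ℂ) :
    HasDerivAt (fun w => Phi (p:ℂ) (q:ℂ) b c w)
      (b / c * Phi (p:ℂ) (q:ℂ) (b + 1) (c + 1) z) z := by
  obtain ⟨C, hC0, hC⟩ := extBeta_bound p q hp hq b (c - b) hb hcb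
  have hB : 0 < ‖Complex.betaIntegral b (c - b)‖ :=
    norm_pos_iff.2 (betaIntegral_ne_zero hb hcb)
  set B := Complex.betaIntegral b (c - b) with hBdef
  set A : ℕ → ℂ := fun k => extBeta (p:ℂ) (q:ℂ) (b + k) (c - b) / B with hAdef
  have hAnorm : ∀ k, ‖A k‖ ≤ C / ‖B‖ := by
    intro k
    rw [hAdef]
    simp only []
    rw [norm_div]
    gcongr
    exact hC k
  set R : ℝ := ‖z‖ + 1 with hRdef
  have hR1 : 1 ≤ R := by
    rw [hRdef]; linarith [norm_nonneg z]
  have hzR : z ∈ Metric.ball (0:ℂ) R := by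
    simp [hRdef, Metric.mem_ball, dist_zero_right]
  set u : ℕ → ℝ := fun k => C / ‖B‖ * ((2 * R) ^ k / k.factorial) with hudef
  have hu : Summable u := (Real.summable_pow_div_factorial (2 * R)).mul_left _
  have key : ∀ k (y : ℂ), y ∈ Metric.ball (0:ℂ) R →
      ‖A k * ((k : ℂ) * y ^ (k - 1)) / k.factorial‖ ≤ u k := by
    intro k y hy
    have hynorm : ‖y‖ ≤ R := by
      rw [Metric.mem_ball, dist_zero_right] at hy; linarith
    have huk : u k = C / ‖B‖ * (2 * R) ^ k / k.factorial := by
      rw [hudef]; simp only []; rw [mul_div_assoc]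
    rw [norm_div, norm_mul, norm_mul, norm_pow, Complex.norm_natCast, Complex.norm_natCast, huk]
    gcongr ?_ / _
    calc ‖A k‖ * ((k : ℝ) * ‖y‖ ^ (k - 1))
        ≤ (C / ‖B‖) * ((2 : ℝ) ^ k * R ^ k) := by
          apply mul_le_mul (hAnorm k) ?_ (by positivity) (by positivity)
          apply mul_le_mul ?_ ?_ (by positivity) (by positivity)
          · exact_mod_cast (Nat.lt_two_pow_self (n := k)).le
          · calc ‖y‖ ^ (k - 1) ≤ R ^ (k - 1) := pow_le_pow_left₀ (norm_nonneg y) hynorm _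
              _ ≤ R ^ k := pow_le_pow_right₀ hR1 (Nat.sub_le k 1)
      _ = C / ‖B‖ * (2 * R) ^ k := by rw [mul_pow]
  have hderiv : ∀ k (y : ℂ), y ∈ Metric.ball (0:ℂ) R →
      HasDerivAt (fun w : ℂ => A k * w ^ k / k.factorial)
        (A k * ((k : ℂ) * y ^ (k - 1)) / k.factorial) y := by
    intro k y _
    exact ((hasDerivAt_pow k y).const_mul (A k)).div_const _
  have hsum0 : Summable (fun k => A k * (0:ℂ) ^ k / k.factorial) :=
    phi_summable p q hp hq b c hb hcb 0
  have H := hasDerivAt_tsum_of_isPreconnected hu Metric.isOpen_ball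
    (convex_ball (0:ℂ) R).isPreconnected
    hderiv key (Metric.mem_ball_self (by positivity)) hsum0 hzR
  have hsum' : Summable (fun k => A k * ((k : ℂ) * z ^ (k - 1)) / k.factorial) :=
    Summable.of_norm_bounded hu fun k => key k z hzR
  have hBne : B ≠ 0 := betaIntegral_ne_zero hb hcb
  have hbne : b ≠ 0 := fun h => by simp [h] at hb
  have hcne : c ≠ 0 := by
    intro h
    have h2 : 0 < b.re + (c - b).re := by linarith
    rw [Complex.sub_re] at h2
    rw [h] at h2
    simp at h2
  have hsumid : (∑' k : ℕ, A k * ((k : ℂ) * z ^ (k - 1)) / k.factorial)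
      = b / c * Phi (p:ℂ) (q:ℂ) (b + 1) (c + 1) z := by
    rw [Summable.tsum_eq_zero_add hsum']
    have h0 : A 0 * (((0:ℕ) : ℂ) * z ^ (0 - 1)) / ((Nat.factorial 0 : ℕ) : ℂ) = 0 := by
      norm_num
    rw [h0, zero_add]
    have hterm : ∀ k : ℕ, A (k + 1) * (((k + 1 : ℕ) : ℂ) * z ^ (k + 1 - 1)) /
          (((k+1).factorial : ℕ) : ℂ)
        = b / c * (extBeta (p:ℂ) (q:ℂ) ((b + 1) + (k:ℂ)) ((c + 1) - (b + 1)) /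
            Complex.betaIntegral (b + 1) ((c + 1) - (b + 1)) * z ^ k /
            ((k.factorial : ℕ) : ℂ)) := by
      intro k
      have hcb1 : (c + 1) - (b + 1) = c - b := by ring
      have hbeta : Complex.betaIntegral (b + 1) (c - b) = b / c * B := by
        have h3 := betaIntegral_succ hb hcb
        have h4 : b + (c - b) = c := by ring
        rw [h4] at h3
        exact h3
      have harg : b + ((k + 1 : ℕ) : ℂ) = (b + 1) + (k : ℂ) := by push_cast; ring
      have hfact : (((k+1).factorial : ℕ) : ℂ) = ((k + 1 : ℕ) : ℂ) * ((k.factorial : ℕ) : ℂ) := by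
        rw [Nat.factorial_succ]; push_cast; ring
      have hk1 : ((k + 1 : ℕ) : ℂ) ≠ 0 := by exact_mod_cast Nat.succ_ne_zero k
      have hfne : ((k.factorial : ℕ) : ℂ) ≠ 0 := by
        exact_mod_cast k.factorial_ne_zero
      have hk1' : ((k:ℂ) + 1) ≠ 0 := by
        exact_mod_cast Nat.succ_ne_zero k
      rw [hcb1, hbeta, hAdef]
      simp only []
      rw [harg, Nat.add_sub_cancel, hfact]
      field_simp [hbne, hcne, hBne, hk1, hk1', hfne]
    rw [tsum_congr hterm, tsum_mul_left, Phi]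
  rw [hsumid] at H
  exact H

lemma phi_iteratedDeriv (p q : ℝ) (hp : 0 ≤ p) (hq : 0 ≤ q) (b c : ℂ)
    (hb : 0 < b.re) (hcb : 0 < (c - b).re) (n : ℕ) :
    iteratedDeriv n (fun w => Phi (p:ℂ) (q:ℂ) b c w)
      = fun z => poch b n / poch c n * Phi (p:ℂ) (q:ℂ) (b + n) (c + n) z := by
  have hcpos : 0 < c.re := by
    have h4 : c.re = b.re + (c - b).re := by rw [Complex.sub_re]; ring
    rw [h4]; linarith
  induction n with
  | zero => simp [iteratedDeriv_zero, poch_zero]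
  | succ n ih =>
    rw [iteratedDeriv_succ, ih]
    funext z
    have hn0 : (0:ℝ) ≤ (n:ℝ) := Nat.cast_nonneg n
    have hbn : 0 < (b + (n:ℂ)).re := by
      rw [Complex.add_re, Complex.natCast_re]; linarith
    have hcbn : 0 < ((c + (n:ℂ)) - (b + (n:ℂ))).re := by
      have h4 : (c + (n:ℂ)) - (b + (n:ℂ)) = c - b := by ring
      rw [h4]; exact hcb
    have hcnpos : 0 < (c + (n:ℂ)).re := by
      rw [Complex.add_re, Complex.natCast_re]; linarith
    have hcnne : (c + (n:ℂ)) ≠ 0 := by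
      intro h; rw [h] at hcnpos; simp at hcnpos
    have hpc : poch c n ≠ 0 := poch_ne_zero hcpos n
    have hD := phi_hasDerivAt p q hp hq (b + n) (c + n) hbn hcbn z
    have hder := (hD.const_mul (poch b n / poch c n)).deriv
    rw [hder]
    rw [poch_succ, poch_succ]
    have harg1 : b + ((n + 1 : ℕ) : ℂ) = (b + n) + 1 := by push_cast; ring
    have harg2 : c + ((n + 1 : ℕ) : ℂ) = (c + n) + 1 := by push_cast; ring
    rw [harg1, harg2]
    field_simp

lemma iteratedDeriv_congr_nhds {f g : ℂ → ℂ} {z : ℂ} (h : f =ᶠ[nhds z] g) (n : ℕ) :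
    iteratedDeriv n f z = iteratedDeriv n g z := by
  have H : ∀ m : ℕ, iteratedDeriv m f =ᶠ[nhds z] iteratedDeriv m g := by
    intro m
    induction m with
    | zero => simpa [iteratedDeriv_zero] using h
    | succ m ih =>
      simp only [iteratedDeriv_succ]
      exact ih.deriv
  exact (H n).eq_of_nhds

theorem M_deriv (p q : ℝ) (hp : 0 ≤ p) (hq : 0 ≤ q) (lam rho : ℂ)
    (hr : -(1/2) < rho.re) (h1 : -(1/2) < (rho + lam).re) (h2 : -(1/2) < (rho - lam).re)
    (n : ℕ) (z : ℂ) (hz : ∀ x : ℝ, x ≤ 0 → (x : ℂ) ≠ z) :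
    iteratedDeriv n (fun w => Complex.exp (w / 2) * w ^ (-rho - 1/2) * M p q lam rho w) z =
      poch (rho - lam + 1/2) n / poch (2 * rho + 1) n *
        Complex.exp (z / 2) * z ^ (-rho - n / 2 - 1/2) *
        M p q (lam - n / 2) (rho + n / 2) z := by
  set b : ℂ := rho - lam + 1/2 with hbdef
  set c : ℂ := 2 * rho + 1 with hcdef
  have h12 : ((1:ℂ)/2).re = 1/2 := by norm_num [Complex.div_re]
  have hb : 0 < b.re := by
    rw [hbdef, Complex.add_re, h12]
    linarith
  have hcb : 0 < (c - b).re := by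
    have he : c - b = rho + lam + 1/2 := by rw [hbdef, hcdef]; ring
    rw [he, Complex.add_re, h12]
    linarith
  have hz0 : z ≠ 0 := by
    intro h
    exact hz 0 le_rfl (by simp [h])
  have heq : (fun w => Complex.exp (w / 2) * w ^ (-rho - 1/2) * M p q lam rho w)
      =ᶠ[nhds z] fun w => Phi (p:ℂ) (q:ℂ) b c w := by
    filter_upwards [IsOpen.mem_nhds isOpen_compl_singleton
      (by simpa using hz0 : z ∈ ({(0:ℂ)}ᶜ : Set ℂ))] with w hw
    have hw0 : w ≠ 0 := hw
    rw [M]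
    have hcpow : w ^ (-rho - 1/2) * w ^ (rho + 1/2) = 1 := by
      rw [← Complex.cpow_add _ _ hw0]
      have h4 : -rho - 1/2 + (rho + 1/2) = 0 := by ring
      rw [h4, Complex.cpow_zero]
    have hexp : Complex.exp (w / 2) * Complex.exp (-w / 2) = 1 := by
      rw [← Complex.exp_add]
      have h4 : w / 2 + -w / 2 = 0 := by ring
      rw [h4, Complex.exp_zero]
    rw [← hbdef, ← hcdef]
    calc Complex.exp (w / 2) * w ^ (-rho - 1/2) *
          (w ^ (rho + 1/2) * Complex.exp (-w / 2) * Phi (p:ℂ) (q:ℂ) b c w)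
        = (w ^ (-rho - 1/2) * w ^ (rho + 1/2)) * (Complex.exp (w / 2) * Complex.exp (-w / 2)) *
          Phi (p:ℂ) (q:ℂ) b c w := by ring
      _ = Phi (p:ℂ) (q:ℂ) b c w := by rw [hcpow, hexp]; ring
  rw [iteratedDeriv_congr_nhds heq n, phi_iteratedDeriv p q hp hq b c hb hcb n]
  rw [M]
  have e1 : rho + (n:ℂ)/2 - (lam - (n:ℂ)/2) + 1/2 = b + n := by rw [hbdef]; push_cast; ring
  have e2 : 2 * (rho + (n:ℂ)/2) + 1 = c + n := by rw [hcdef]; push_cast; ring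
  rw [e1, e2]
  have hcpow : z ^ (-rho - (n:ℂ)/2 - 1/2) * z ^ (rho + (n:ℂ)/2 + 1/2) = 1 := by
    rw [← Complex.cpow_add _ _ hz0]
    have h4 : -rho - (n:ℂ)/2 - 1/2 + (rho + (n:ℂ)/2 + 1/2) = 0 := by ring
    rw [h4, Complex.cpow_zero]
  have hexp : Complex.exp (z / 2) * Complex.exp (-z / 2) = 1 := by
    rw [← Complex.exp_add]
    have h4 : z / 2 + -z / 2 = 0 := by ring
    rw [h4, Complex.exp_zero]
  have hkey : Complex.exp (z / 2) * z ^ (-rho - (n:ℂ)/2 - 1/2) *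
      (z ^ (rho + (n:ℂ)/2 + 1/2) * Complex.exp (-z / 2) * Phi (p:ℂ) (q:ℂ) (b + n) (c + n) z)
      = Phi (p:ℂ) (q:ℂ) (b + n) (c + n) z := by
    calc Complex.exp (z / 2) * z ^ (-rho - (n:ℂ)/2 - 1/2) *
          (z ^ (rho + (n:ℂ)/2 + 1/2) * Complex.exp (-z / 2) * Phi (p:ℂ) (q:ℂ) (b + n) (c + n) z)
        = (z ^ (-rho - (n:ℂ)/2 - 1/2) * z ^ (rho + (n:ℂ)/2 + 1/2)) *
          (Complex.exp (z / 2) * Complex.exp (-z / 2)) * Phi (p:ℂ) (q:ℂ) (b + n) (c + n) z := by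
          ring
      _ = Phi (p:ℂ) (q:ℂ) (b + n) (c + n) z := by rw [hcpow, hexp]; ring
  linear_combination (-(poch b n / poch c n)) * hkey
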